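/- Let A be a Frobenius category and P its full subcategory of projective objects. If X →i Y →d Z is a composable pair in A such that the induced sequence 0 → h_X →(h(i)) h_Y →(h(d)) h_Z → 0 is a short exact sequence in Mod P, then (i, d) is a conflation of A. That is, the restricted Yoneda functor h reflects exactness. -/

import Mathlib

universe v u

open CategoryTheory Limits

namespace Paper

variable {A : Type u} [Category.{v} A]

section Defs
variable [Preadditive A]

/-- `i` is a kernel of `d`. -/
def IsKer {X Y Z : A} (i : X ⟶ Y) (d : Y ⟶ Z) : Prop :=
  i ≫ d = 0 ∧ ∀ ⦃W : A⦄ (g : W ⟶ Y), g ≫ d = 0 → ∃! g' : W ⟶ X, g' ≫ i = g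

/-- `d` is a cokernel of `i`. -/
def IsCoker {X Y Z : A} (i : X ⟶ Y) (d : Y ⟶ Z) : Prop :=
  i ≫ d = 0 ∧ ∀ ⦃W : A⦄ (g : Y ⟶ W), i ≫ g = 0 → ∃! g' : Z ⟶ W, d ≫ g' = g

/-- An exact structure in the sense of Quillen (following Keller's axioms) on an
additive category `A`: a class of kernel-cokernel pairs (conflations), closed under
isomorphism, satisfying the axioms (Ex0), (Ex1), (Ex1op), (Ex2), (Ex2op). -/
structure ExactStructure (A : Type u) [Category.{v} A] [Preadditive A] where
  /-- the class of conflations `X ⟶ Y ⟶ Z` -/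
  IsConflation : ∀ ⦃X Y Z : A⦄, (X ⟶ Y) → (Y ⟶ Z) → Prop
  ker_of_conflation : ∀ ⦃X Y Z : A⦄ {i : X ⟶ Y} {d : Y ⟶ Z}, IsConflation i d → IsKer i d
  coker_of_conflation : ∀ ⦃X Y Z : A⦄ {i : X ⟶ Y} {d : Y ⟶ Z}, IsConflation i d → IsCoker i d
  iso_closed : ∀ ⦃X Y Z X' Y' Z' : A⦄ {i : X ⟶ Y} {d : Y ⟶ Z} {i' : X' ⟶ Y'} {d' : Y' ⟶ Z'}
    (eX : X ≅ X') (eY : Y ≅ Y') (eZ : Z ≅ Z'),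
    i ≫ eY.hom = eX.hom ≫ i' → d ≫ eZ.hom = eY.hom ≫ d' →
    IsConflation i d → IsConflation i' d'
  ex0 : ∀ ⦃Z : A⦄, IsZero Z → ∃ (X : A) (i : X ⟶ Z), IsConflation i (𝟙 Z)
  ex1 : ∀ ⦃Y Z W : A⦄ {d : Y ⟶ Z} {e : Z ⟶ W},
    (∃ (X : A) (i : X ⟶ Y), IsConflation i d) → (∃ (X : A) (i : X ⟶ Z), IsConflation i e) →
    ∃ (X : A) (i : X ⟶ Y), IsConflation i (d ≫ e)
  ex1op : ∀ ⦃X Y W : A⦄ {i : X ⟶ Y} {j : Y ⟶ W},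
    (∃ (Z : A) (d : Y ⟶ Z), IsConflation i d) → (∃ (Z : A) (d : W ⟶ Z), IsConflation j d) →
    ∃ (Z : A) (d : W ⟶ Z), IsConflation (i ≫ j) d
  ex2 : ∀ ⦃Y Z Z' : A⦄ (d : Y ⟶ Z) (f : Z' ⟶ Z),
    (∃ (X : A) (i : X ⟶ Y), IsConflation i d) →
    ∃ (Y' : A) (d' : Y' ⟶ Z') (f' : Y' ⟶ Y),
      IsPullback d' f' f d ∧ ∃ (X : A) (i : X ⟶ Y'), IsConflation i d'
  ex2op : ∀ ⦃X Y X' : A⦄ (i : X ⟶ Y) (f : X ⟶ X'),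
    (∃ (Z : A) (d : Y ⟶ Z), IsConflation i d) →
    ∃ (Y' : A) (i' : X' ⟶ Y') (f' : Y ⟶ Y'),
      IsPushout i f f' i' ∧ ∃ (Z : A) (d : Y' ⟶ Z), IsConflation i' d

namespace ExactStructure

variable (E : ExactStructure A)

/-- `d` is a deflation. -/
def IsDeflation {Y Z : A} (d : Y ⟶ Z) : Prop :=
  ∃ (X : A) (i : X ⟶ Y), E.IsConflation i d

/-- `i` is an inflation. -/
def IsInflation {X Y : A} (i : X ⟶ Y) : Prop :=
  ∃ (Z : A) (d : Y ⟶ Z), E.IsConflation i d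

/-- projective object: every deflation onto it splits. -/
def Proj (P : A) : Prop :=
  ∀ ⦃Y : A⦄ (d : Y ⟶ P), E.IsDeflation d → ∃ s : P ⟶ Y, s ≫ d = 𝟙 P

/-- injective object: every inflation out of it splits. -/
def Inj (I : A) : Prop :=
  ∀ ⦃Y : A⦄ (i : I ⟶ Y), E.IsInflation i → ∃ r : Y ⟶ I, i ≫ r = 𝟙 I

/-- enough projective objects -/
def EnoughProj : Prop :=
  ∀ X : A, ∃ (P : A) (d : P ⟶ X), E.Proj P ∧ E.IsDeflation d

/-- enough injective objects -/
def EnoughInj : Prop :=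
  ∀ X : A, ∃ (I : A) (i : X ⟶ I), E.Inj I ∧ E.IsInflation i

/-- A Frobenius category: enough projectives, enough injectives, and the two classes coincide. -/
structure IsFrobenius : Prop where
  enoughProj : E.EnoughProj
  enoughInj : E.EnoughInj
  proj_iff_inj : ∀ P : A, E.Proj P ↔ E.Inj P

end ExactStructure

end Defs

end Paper
namespace Paper

open CategoryTheory Limits

section Modules

variable (C : Type u) [Category.{v} C] [Preadditive C]

/-- The category `Mod C` of (additive) contravariant functors from `C` to abelian
groups; a Cohen-Macaulay module is automatically additive, so we work in the ambient
functor category, which has the same Hom-groups. -/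
abbrev ModC := Cᵒᵖ ⥤ AddCommGrpCat.{v}

/-- A `C`-module is finitely generated projective iff it is a direct summand of a
representable module `H_X = Hom_C(-, X)`. -/
def IsFGProj (M : ModC C) : Prop :=
  ∃ (X : C) (s : M ⟶ preadditiveYoneda.obj X) (r : preadditiveYoneda.obj X ⟶ M),
    s ≫ r = 𝟙 M

/-- `0 ⟶ L ⟶u M ⟶v N ⟶ 0` is a short exact sequence of `C`-modules
(exactness is objectwise). -/
def IsSES {L M N : ModC C} (u : L ⟶ M) (v : M ⟶ N) : Prop :=
  ∀ c : Cᵒᵖ, Function.Injective (u.app c) ∧ Function.Surjective (v.app c) ∧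
    ∀ x : M.obj c, (v.app c) x = 0 ↔ ∃ y : L.obj c, (u.app c) y = x

/-- A totally acyclic complex: an acyclic complex of finitely generated projective
`C`-modules such that `Hom(P^•, H_X)` is acyclic for every object `X` of `C`. -/
structure IsTotallyAcyclic (P : ℤ → ModC C) (d : ∀ n : ℤ, P n ⟶ P (n + 1)) : Prop where
  fgProj : ∀ n, IsFGProj C (P n)
  comp_zero : ∀ n, d n ≫ d (n + 1) = 0
  acyclic : ∀ (n : ℤ) (c : Cᵒᵖ) (x : (P (n + 1)).obj c),
    ((d (n + 1)).app c) x = 0 → ∃ y : (P n).obj c, ((d n).app c) y = x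
  hom_acyclic : ∀ (n : ℤ) (X : C) (g : P (n + 1) ⟶ preadditiveYoneda.obj X),
    d n ≫ g = 0 → ∃ h : P (n + 1 + 1) ⟶ preadditiveYoneda.obj X, d (n + 1) ≫ h = g

/-- A `C`-module is (maximal) Cohen-Macaulay iff it is isomorphic to the `0`-th
cocycle `Z^0(P^•)` (i.e. the kernel of `d^0`) of some totally acyclic complex. -/
def IsCM (M : ModC C) : Prop :=
  ∃ (P : ℤ → ModC C) (d : ∀ n : ℤ, P n ⟶ P (n + 1)), IsTotallyAcyclic C P d ∧
    ∃ ι : M ⟶ P 0, ι ≫ d 0 = 0 ∧ ∀ c : Cᵒᵖ,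
      Function.Injective (ι.app c) ∧
      ∀ x : (P 0).obj c, ((d 0).app c) x = 0 → ∃ m : M.obj c, (ι.app c) m = x

end Modules

section ResYoneda

variable {A : Type u} [Category.{v} A] [Preadditive A]

/-- The full subcategory `P` of projective objects of `(A, E)`. -/
abbrev ProjCat (E : ExactStructure A) := ObjectProperty.FullSubcategory (fun P : A => E.Proj P)

/-- The restricted Yoneda functor `h : A ⥤ Mod P`, sending `X` to
`h_X = Hom_A(-, X)|_P`. -/
def resYoneda (E : ExactStructure A) : A ⥤ ModC (ProjCat E) :=
  preadditiveYoneda ⋙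
    (Functor.whiskeringLeft (ProjCat E)ᵒᵖ Aᵒᵖ AddCommGrpCat.{v}).obj (ObjectProperty.ι _).op

end ResYoneda

end Paper
namespace Paper

open CategoryTheory Limits

section Aux

variable {A : Type u} [Category.{v} A] [Preadditive A] [HasZeroObject A] [HasBinaryBiproducts A]

theorem IsKer.cancel {X Y Z : A} {i : X ⟶ Y} {d : Y ⟶ Z} (h : IsKer i d)
    {W : A} {a b : W ⟶ X} (hab : a ≫ i = b ≫ i) : a = b := by
  have h0 : (a ≫ i) ≫ d = 0 := by rw [Category.assoc, h.1, comp_zero]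
  obtain ⟨g', -, hg'⟩ := h.2 (a ≫ i) h0
  exact (hg' a rfl).trans (hg' b hab.symm).symm

theorem IsCoker.cancel {X Y Z : A} {i : X ⟶ Y} {d : Y ⟶ Z} (h : IsCoker i d)
    {W : A} {a b : Z ⟶ W} (hab : d ≫ a = d ≫ b) : a = b := by
  have h0 : i ≫ d ≫ a = 0 := by rw [← Category.assoc, h.1, zero_comp]
  obtain ⟨g', -, hg'⟩ := h.2 (d ≫ a) h0
  exact (hg' a rfl).trans (hg' b hab.symm).symm

theorem defl_cancel (E : ExactStructure A) {Y Z : A} {d : Y ⟶ Z}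
    (h : E.IsDeflation d) {W : A} {a b : Z ⟶ W} (hab : d ≫ a = d ≫ b) : a = b := by
  obtain ⟨X, i, hc⟩ := h
  exact (E.coker_of_conflation hc).cancel hab

theorem conflation_of_isKer (E : ExactStructure A) {X X' Y Z : A} {i : X ⟶ Y} {i' : X' ⟶ Y}
    {d : Y ⟶ Z} (hc : E.IsConflation i d) (hk : IsKer i' d) : E.IsConflation i' d := by
  have hki := E.ker_of_conflation hc
  obtain ⟨φ, hφ, -⟩ := hk.2 i hki.1
  obtain ⟨ψ, hψ, -⟩ := hki.2 i' hk.1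
  have h1 : φ ≫ ψ = 𝟙 X := hki.cancel (by rw [Category.assoc, hψ, hφ, Category.id_comp])
  have h2 : ψ ≫ φ = 𝟙 X' := hk.cancel (by rw [Category.assoc, hφ, hψ, Category.id_comp])
  exact E.iso_closed ⟨φ, ψ, h1, h2⟩ (Iso.refl Y) (Iso.refl Z)
    (by simpa using hφ.symm) (by simp) hc

theorem conflation_of_isCoker (E : ExactStructure A) {X Y Z Z' : A} {i : X ⟶ Y}
    {d : Y ⟶ Z} {d' : Y ⟶ Z'} (hc : E.IsConflation i d) (hk : IsCoker i d') :
    E.IsConflation i d' := by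
  have hkc := E.coker_of_conflation hc
  obtain ⟨φ, hφ, -⟩ := hkc.2 d' hk.1
  obtain ⟨ψ, hψ, -⟩ := hk.2 d hkc.1
  have h1 : φ ≫ ψ = 𝟙 Z := hkc.cancel (by rw [← Category.assoc, hφ, hψ, Category.comp_id])
  have h2 : ψ ≫ φ = 𝟙 Z' := hk.cancel (by rw [← Category.assoc, hψ, hφ, Category.comp_id])
  exact E.iso_closed (Iso.refl X) (Iso.refl Y) ⟨φ, ψ, h1, h2⟩ (by simp) (by simpa using hφ) hc

theorem id_deflation (E : ExactStructure A) (C : A) : E.IsDeflation (𝟙 C) := by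
  obtain ⟨O, hO⟩ := HasZeroObject.zero (C := A)
  obtain ⟨X, i, hc⟩ := E.ex0 hO
  obtain ⟨Y', d', f', hpb, hdef⟩ := E.ex2 (𝟙 O) (0 : C ⟶ O) ⟨X, i, hc⟩
  have hs := hpb.lift_fst (𝟙 C) (0 : C ⟶ O) (hO.eq_of_tgt _ _)
  set s : C ⟶ Y' := hpb.lift (𝟙 C) (0 : C ⟶ O) (hO.eq_of_tgt _ _) with hsdef
  have hds : d' ≫ s = 𝟙 Y' := by
    apply hpb.hom_ext
    · rw [Category.assoc, hs, Category.comp_id, Category.id_comp]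
    · exact hO.eq_of_tgt _ _
  obtain ⟨X₁, i₁, hc₁⟩ := hdef
  refine ⟨X₁, i₁ ≫ d', E.iso_closed (Iso.refl X₁) ⟨d', s, hds, hs⟩ (Iso.refl C) (by simp) (by simp) hc₁⟩

theorem zero_inflation (E : ExactStructure A) (C : A) :
    ∃ (O : A), IsZero O ∧ ∃ i : O ⟶ C, E.IsConflation i (𝟙 C) := by
  obtain ⟨X₁, i₁, hc⟩ := id_deflation E C
  have hk := E.ker_of_conflation hc
  have hi0 : i₁ = 0 := by simpa using hk.1
  refine ⟨X₁, ?_, i₁, hc⟩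
  rw [IsZero.iff_id_eq_zero]
  apply hk.cancel
  rw [hi0, comp_zero, zero_comp]

theorem inr_fst_conflation (E : ExactStructure A) (B C : A) :
    E.IsConflation (biprod.inr : C ⟶ B ⊞ C) (biprod.fst : B ⊞ C ⟶ B) := by
  obtain ⟨O, hO, i₀, hc₀⟩ := zero_inflation E B
  obtain ⟨Y', i', f', hpo, hdef⟩ := E.ex2op i₀ (0 : O ⟶ C) ⟨_, _, hc₀⟩
  set ρ : Y' ⟶ B ⊞ C := hpo.desc biprod.inl biprod.inr (hO.eq_of_src _ _) with hρdef
  have hfρ : f' ≫ ρ = biprod.inl := hpo.inl_desc _ _ _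
  have hiρ : i' ≫ ρ = biprod.inr := hpo.inr_desc _ _ _
  set σ : B ⊞ C ⟶ Y' := biprod.desc f' i' with hσdef
  have hρσ : ρ ≫ σ = 𝟙 Y' := by
    apply hpo.hom_ext
    · rw [← Category.assoc, hfρ, Category.comp_id, biprod.inl_desc]
    · rw [← Category.assoc, hiρ, Category.comp_id, biprod.inr_desc]
  have hσρ : σ ≫ ρ = 𝟙 (B ⊞ C) := by
    apply biprod.hom_ext'
    · rw [← Category.assoc, biprod.inl_desc, hfρ, Category.comp_id]
    · rw [← Category.assoc, biprod.inr_desc, hiρ, Category.comp_id]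
  obtain ⟨Z₀, d₀, hc'⟩ := hdef
  have hconf : E.IsConflation (biprod.inr : C ⟶ B ⊞ C) (σ ≫ d₀) := by
    refine E.iso_closed (Iso.refl C) ⟨ρ, σ, hρσ, hσρ⟩ (Iso.refl Z₀) (by simpa using hiρ) ?_ hc'
    show d₀ ≫ (Iso.refl Z₀).hom = ρ ≫ σ ≫ d₀
    rw [Iso.refl_hom, Category.comp_id, ← Category.assoc, hρσ, Category.id_comp]
  refine conflation_of_isCoker E hconf ⟨by simp, ?_⟩
  intro W g hg
  refine ⟨biprod.inl ≫ g, ?_, ?_⟩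
  · apply biprod.hom_ext'
    · rw [← Category.assoc, biprod.inl_fst, Category.id_comp]
    · rw [← Category.assoc, biprod.inr_fst, zero_comp, hg]
  · intro y hy
    rw [← Category.id_comp y, ← biprod.inl_fst, Category.assoc, hy]

theorem fst_deflation (E : ExactStructure A) (B C : A) :
    E.IsDeflation (biprod.fst : B ⊞ C ⟶ B) :=
  ⟨_, _, inr_fst_conflation E B C⟩

theorem deflation_map_id (E : ExactStructure A) {B Z : A} {p : B ⟶ Z}
    (hp : E.IsDeflation p) (C : A) : E.IsDeflation (biprod.map p (𝟙 C)) := by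
  obtain ⟨Y', d', f', hpb, hdef⟩ := E.ex2 p (biprod.fst : Z ⊞ C ⟶ Z) hp
  set φ : B ⊞ C ⟶ Y' := hpb.lift (biprod.map p (𝟙 C)) biprod.fst (by simp) with hφdef
  have hφd : φ ≫ d' = biprod.map p (𝟙 C) := hpb.lift_fst _ _ _
  have hφf : φ ≫ f' = biprod.fst := hpb.lift_snd _ _ _
  set ξ : Y' ⟶ B ⊞ C := biprod.lift f' (d' ≫ biprod.snd) with hξdef
  have hkey : ξ ≫ biprod.map p (𝟙 C) = d' := by
    apply biprod.hom_ext
    · rw [Category.assoc, biprod.map_fst, ← Category.assoc, biprod.lift_fst, hpb.w]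
    · rw [Category.assoc, biprod.map_snd, ← Category.assoc, biprod.lift_snd, Category.comp_id]
  have hφξ : φ ≫ ξ = 𝟙 (B ⊞ C) := by
    apply biprod.hom_ext
    · rw [Category.assoc, biprod.lift_fst, hφf, Category.id_comp]
    · rw [Category.assoc, biprod.lift_snd, ← Category.assoc, hφd, biprod.map_snd,
        Category.comp_id, Category.id_comp]
  have hξφ : ξ ≫ φ = 𝟙 Y' := by
    apply hpb.hom_ext
    · rw [Category.assoc, hφd, hkey, Category.id_comp]
    · rw [Category.assoc, hφf, biprod.lift_fst, Category.id_comp]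
  obtain ⟨X₁, x, hc⟩ := hdef
  exact ⟨X₁, x ≫ ξ, E.iso_closed (Iso.refl X₁) ⟨ξ, φ, hξφ, hφξ⟩ (Iso.refl _)
    (by simp) (by simpa using hkey.symm) hc⟩

theorem deflation_desc_id (E : ExactStructure A) {Z C : A} (f : C ⟶ Z) :
    E.IsDeflation (biprod.desc (𝟙 Z) f : Z ⊞ C ⟶ Z) := by
  have hNN' : (biprod.desc biprod.inl (biprod.lift f (𝟙 C)) : Z ⊞ C ⟶ Z ⊞ C) ≫
      biprod.desc biprod.inl (biprod.lift (-f) (𝟙 C)) = 𝟙 (Z ⊞ C) := by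
    apply biprod.hom_ext' <;> apply biprod.hom_ext <;> simp
  have hN'N : (biprod.desc biprod.inl (biprod.lift (-f) (𝟙 C)) : Z ⊞ C ⟶ Z ⊞ C) ≫
      biprod.desc biprod.inl (biprod.lift f (𝟙 C)) = 𝟙 (Z ⊞ C) := by
    apply biprod.hom_ext' <;> apply biprod.hom_ext <;> simp
  have hkey : (biprod.desc biprod.inl (biprod.lift (-f) (𝟙 C)) : Z ⊞ C ⟶ Z ⊞ C) ≫
      biprod.desc (𝟙 Z) f = biprod.fst := by
    apply biprod.hom_ext' <;> simp
  obtain ⟨X₁, x, hc⟩ := fst_deflation E Z C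
  refine ⟨X₁, x ≫ biprod.desc biprod.inl (biprod.lift (-f) (𝟙 C)),
    E.iso_closed (Iso.refl X₁)
      ⟨biprod.desc biprod.inl (biprod.lift (-f) (𝟙 C)),
        biprod.desc biprod.inl (biprod.lift f (𝟙 C)), hN'N, hNN'⟩
      (Iso.refl Z) (by simp) ?_ hc⟩
  show biprod.fst ≫ (Iso.refl Z).hom = _ ≫ biprod.desc (𝟙 Z) f
  rw [Iso.refl_hom, Category.comp_id, hkey]

theorem deflation_desc (E : ExactStructure A) {B Z C : A} {p : B ⟶ Z}
    (hp : E.IsDeflation p) (f : C ⟶ Z) : E.IsDeflation (biprod.desc p f : B ⊞ C ⟶ Z) := by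
  have h1 := E.ex1 (deflation_map_id E hp C) (deflation_desc_id E f)
  have heq : biprod.map p (𝟙 C) ≫ biprod.desc (𝟙 Z) f = biprod.desc p f := by
    apply biprod.hom_ext'
    · rw [← Category.assoc, biprod.inl_map, Category.assoc, biprod.inl_desc,
        Category.comp_id, biprod.inl_desc]
    · rw [← Category.assoc, biprod.inr_map, Category.assoc, biprod.inr_desc,
        Category.id_comp, biprod.inr_desc]
  rwa [heq] at h1

/-- The engine: if `i` is a kernel of `d` and `q ≫ d` is a deflation, then
`Q ⊞ X ⟶ Q ⊞ Y ⟶ Z` is a conflation, where the deflation is `[q ≫ d, d]`. -/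
theorem engine (E : ExactStructure A) {X Y Z Q : A} {i : X ⟶ Y} {d : Y ⟶ Z}
    (hk : IsKer i d) (q : Q ⟶ Y) (hq : E.IsDeflation (q ≫ d)) :
    E.IsConflation
      (biprod.desc (biprod.lift (𝟙 Q) (-q)) (biprod.lift 0 i) : Q ⊞ X ⟶ Q ⊞ Y)
      (biprod.desc (q ≫ d) d) := by
  obtain ⟨X₁, x, hc⟩ := deflation_desc E hq d
  apply conflation_of_isKer E hc
  constructor
  · apply biprod.hom_ext'
    · rw [← Category.assoc, biprod.inl_desc, biprod.lift_desc]
      simp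
    · rw [← Category.assoc, biprod.inr_desc, biprod.lift_desc]
      simp [hk.1]
  · intro W g hg
    have hsum : ((g ≫ biprod.fst) ≫ q + g ≫ biprod.snd) ≫ d = 0 := by
      have hgexp : g = biprod.lift (g ≫ biprod.fst) (g ≫ biprod.snd) := by
        apply biprod.hom_ext <;> simp
      calc ((g ≫ biprod.fst) ≫ q + g ≫ biprod.snd) ≫ d
          = (g ≫ biprod.fst) ≫ (q ≫ d) + (g ≫ biprod.snd) ≫ d := by
            rw [Preadditive.add_comp, Category.assoc, Category.assoc, Category.assoc]
        _ = biprod.lift (g ≫ biprod.fst) (g ≫ biprod.snd) ≫ biprod.desc (q ≫ d) d := by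
            rw [biprod.lift_desc]
        _ = g ≫ biprod.desc (q ≫ d) d := by rw [← hgexp]
        _ = 0 := hg
    obtain ⟨g₃, hg₃, hg₃u⟩ := hk.2 ((g ≫ biprod.fst) ≫ q + g ≫ biprod.snd) hsum
    have hκfst : (biprod.desc (biprod.lift (𝟙 Q) (-q)) (biprod.lift 0 i) : Q ⊞ X ⟶ Q ⊞ Y) ≫
        biprod.fst = biprod.desc (𝟙 Q) 0 := by
      apply biprod.hom_ext'
      · rw [← Category.assoc, biprod.inl_desc, biprod.lift_fst, biprod.inl_desc]
      · rw [← Category.assoc, biprod.inr_desc, biprod.lift_fst, biprod.inr_desc]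
    have hκsnd : (biprod.desc (biprod.lift (𝟙 Q) (-q)) (biprod.lift 0 i) : Q ⊞ X ⟶ Q ⊞ Y) ≫
        biprod.snd = biprod.desc (-q) i := by
      apply biprod.hom_ext'
      · rw [← Category.assoc, biprod.inl_desc, biprod.lift_snd, biprod.inl_desc]
      · rw [← Category.assoc, biprod.inr_desc, biprod.lift_snd, biprod.inr_desc]
    refine ⟨biprod.lift (g ≫ biprod.fst) g₃, ?_, ?_⟩
    · apply biprod.hom_ext
      · rw [Category.assoc, hκfst, biprod.lift_desc, Category.comp_id, comp_zero, add_zero]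
      · rw [Category.assoc, hκsnd, biprod.lift_desc, hg₃]
        rw [Preadditive.comp_neg]
        abel
    · intro y hy
      have hyfst : y ≫ biprod.fst = g ≫ biprod.fst := by
        have := congrArg (· ≫ biprod.fst) hy
        simp only [Category.assoc] at this
        rw [hκfst] at this
        calc y ≫ biprod.fst = y ≫ biprod.desc (𝟙 Q) 0 := by
              apply Eq.symm
              have : biprod.desc (𝟙 Q) (0 : X ⟶ Q) = biprod.fst := by
                apply biprod.hom_ext' <;> simp
              rw [this]
          _ = g ≫ biprod.fst := this
      have hysnd : y ≫ biprod.snd = g₃ := by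
        apply hg₃u
        have := congrArg (· ≫ biprod.snd) hy
        simp only [Category.assoc] at this
        rw [hκsnd] at this
        have hexp : y ≫ biprod.desc (-q) i =
            (y ≫ biprod.fst) ≫ (-q) + (y ≫ biprod.snd) ≫ i := by
          have hyexp : y = biprod.lift (y ≫ biprod.fst) (y ≫ biprod.snd) := by
            apply biprod.hom_ext <;> simp
          nth_rewrite 1 [hyexp]
          rw [biprod.lift_desc]
        rw [hexp, hyfst] at this
        rw [← this, Preadditive.comp_neg]
        abel
      apply biprod.hom_ext
      · rw [biprod.lift_fst]; exact hyfst
      · rw [biprod.lift_snd]; exact hysnd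

/-- If `i` is a kernel of `d` and some `q ≫ d` is a deflation, then `i` is an
inflation, i.e. fits in a conflation `(i, e)`. -/
theorem inflation_of_ker (E : ExactStructure A) {X Y Z : A} {i : X ⟶ Y} {d : Y ⟶ Z}
    (hk : IsKer i d) {Q : A} (q : Q ⟶ Y) (hq : E.IsDeflation (q ≫ d)) :
    ∃ (Ez : A) (e : Y ⟶ Ez), E.IsConflation i e := by
  have hc := engine E hk q hq
  set κ : Q ⊞ X ⟶ Q ⊞ Y := biprod.desc (biprod.lift (𝟙 Q) (-q)) (biprod.lift 0 i) with hκdef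
  have hinf : E.IsInflation κ := ⟨_, _, hc⟩
  obtain ⟨Y'', i'', f'', hpo, hdef⟩ := E.ex2op κ (biprod.snd : Q ⊞ X ⟶ X) hinf
  have hsq : κ ≫ biprod.desc q (𝟙 Y) = biprod.snd ≫ i := by
    apply biprod.hom_ext'
    · rw [← Category.assoc, biprod.inl_desc, biprod.lift_desc, Category.id_comp,
        ← Category.assoc, biprod.inl_snd, zero_comp]
      simp
    · rw [← Category.assoc, biprod.inr_desc, biprod.lift_desc, zero_comp, zero_add,
        Category.comp_id, ← Category.assoc, biprod.inr_snd, Category.id_comp]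
  set ρ : Y'' ⟶ Y := hpo.desc (biprod.desc q (𝟙 Y)) i hsq with hρdef
  have hfρ : f'' ≫ ρ = biprod.desc q (𝟙 Y) := hpo.inl_desc _ _ _
  have hiρ : i'' ≫ ρ = i := hpo.inr_desc _ _ _
  set σ : Y ⟶ Y'' := biprod.inr ≫ f'' with hσdef
  have hσρ : σ ≫ ρ = 𝟙 Y := by
    rw [hσdef, Category.assoc, hfρ, biprod.inr_desc]
  have hw : κ ≫ f'' = biprod.snd ≫ i'' := hpo.w
  have hkey1 : biprod.inl ≫ f'' = q ≫ biprod.inr ≫ f'' := by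
    have h0 : (biprod.lift (𝟙 Q) (-q) : Q ⟶ Q ⊞ Y) ≫ f'' = 0 := by
      have h1 : (biprod.inl : Q ⟶ Q ⊞ X) ≫ κ = biprod.lift (𝟙 Q) (-q) := biprod.inl_desc _ _
      rw [← h1, Category.assoc, hw, ← Category.assoc, biprod.inl_snd, zero_comp]
    have h2 : (biprod.lift (𝟙 Q) (-q) : Q ⟶ Q ⊞ Y) = biprod.inl - q ≫ biprod.inr := by
      apply biprod.hom_ext <;> simp
    rw [h2, Preadditive.sub_comp, sub_eq_zero, Category.assoc] at h0
    exact h0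
  have hkey2 : i ≫ biprod.inr ≫ f'' = i'' := by
    have h1 : (biprod.inr : X ⟶ Q ⊞ X) ≫ κ = i ≫ biprod.inr := by
      rw [hκdef, biprod.inr_desc]
      apply biprod.hom_ext <;> simp
    rw [← Category.assoc, ← h1, Category.assoc, hw, ← Category.assoc, biprod.inr_snd,
      Category.id_comp]
  have hρσ : ρ ≫ σ = 𝟙 Y'' := by
    apply hpo.hom_ext
    · rw [← Category.assoc, hfρ, Category.comp_id]
      apply biprod.hom_ext'
      · rw [← Category.assoc, biprod.inl_desc, hkey1]
      · rw [← Category.assoc, biprod.inr_desc, Category.id_comp, hσdef]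
    · rw [← Category.assoc, hiρ, Category.comp_id, hσdef, hkey2]
  obtain ⟨Z₀, d₀, hc₀⟩ := hdef
  refine ⟨Z₀, σ ≫ d₀, E.iso_closed (Iso.refl X) ⟨ρ, σ, hρσ, hσρ⟩ (Iso.refl Z₀)
    (by simpa using hiρ) ?_ hc₀⟩
  show d₀ ≫ (Iso.refl Z₀).hom = ρ ≫ σ ≫ d₀
  rw [Iso.refl_hom, Category.comp_id, ← Category.assoc, hρσ, Category.id_comp]

/-- Projective objects lift along deflations. -/
theorem proj_lift (E : ExactStructure A) {P Yy Ez : A} (hP : E.Proj P) {e : Yy ⟶ Ez}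
    (he : E.IsDeflation e) (g : P ⟶ Ez) : ∃ u : P ⟶ Yy, u ≫ e = g := by
  obtain ⟨Y', d', f', hpb, hdef⟩ := E.ex2 e g he
  obtain ⟨s, hs⟩ := hP d' hdef
  exact ⟨s ≫ f', by rw [Category.assoc, ← hpb.w, ← Category.assoc, hs, Category.id_comp]⟩

theorem resYoneda_app (E : ExactStructure A) {Y Y' : A} (f : Y ⟶ Y') (P : ProjCat E)
    (u : ((resYoneda E).obj Y).obj (Opposite.op P)) :
    ((resYoneda E).map f).app (Opposite.op P) u = (u : P.obj ⟶ Y) ≫ f := rfl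

end Aux

/-- **Theorem (Step 4 of Theorem 4.2).** The restricted Yoneda functor of a Frobenius
category reflects exactness: if the image under `h` of a composable pair `X ⟶i Y ⟶d Z`
is a short exact sequence `0 → h_X → h_Y → h_Z → 0` in `Mod P`, then `(i, d)` is a
conflation of `A`. -/
theorem resYoneda_reflects_exactness
    {A : Type u} [Category.{v} A] [Preadditive A] [HasZeroObject A] [HasBinaryBiproducts A]
    (E : ExactStructure A) (hE : E.IsFrobenius)
    ⦃X Y Z : A⦄ (i : X ⟶ Y) (d : Y ⟶ Z)
    (h : IsSES (ProjCat E) ((resYoneda E).map i) ((resYoneda E).map d)) :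
    E.IsConflation i d := by
  -- `i` kills any composite with `d = 0` test from projectives; first: `i` is "mono"
  have hmono : ∀ {W : A} (t : W ⟶ X), t ≫ i = 0 → t = 0 := by
    intro W t ht
    obtain ⟨P, r, hP, hr⟩ := hE.enoughProj W
    have h1 : (r ≫ t) ≫ i = 0 := by rw [Category.assoc, ht, comp_zero]
    have h2 : r ≫ t = 0 := by
      apply (h (Opposite.op ⟨P, hP⟩)).1
      erw [resYoneda_app, resYoneda_app]
      show (r ≫ t) ≫ i = (0 : P ⟶ X) ≫ i
      rw [h1, zero_comp]
    exact defl_cancel E hr (by rw [h2, comp_zero])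
  -- `i ≫ d = 0`
  have hcomp0 : i ≫ d = 0 := by
    obtain ⟨P, r, hP, hr⟩ := hE.enoughProj X
    have hx := ((h (Opposite.op ⟨P, hP⟩)).2.2
      (((resYoneda E).map i).app (Opposite.op ⟨P, hP⟩) r)).mpr ⟨r, rfl⟩
    erw [resYoneda_app, resYoneda_app] at hx
    refine defl_cancel E hr ?_
    rw [← Category.assoc, comp_zero]
    exact hx
  -- `i` is a kernel of `d`
  have hker : IsKer i d := by
    refine ⟨hcomp0, ?_⟩
    intro W g hg
    obtain ⟨P, r, hP, hr⟩ := hE.enoughProj W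
    obtain ⟨K, j, hcr⟩ := hr
    have hjr : j ≫ r = 0 := (E.ker_of_conflation hcr).1
    have h1 : (r ≫ g) ≫ d = 0 := by rw [Category.assoc, hg, comp_zero]
    obtain ⟨t, ht⟩ := ((h (Opposite.op ⟨P, hP⟩)).2.2 (r ≫ g)).mp
      (by erw [resYoneda_app]; exact h1)
    rw [resYoneda_app] at ht
    change P ⟶ X at t
    -- ht : t ≫ i = r ≫ g
    have hjt : (j ≫ t) ≫ i = 0 := by
      rw [Category.assoc, ht, ← Category.assoc, hjr, zero_comp]
    have hjt0 : j ≫ t = 0 := hmono _ hjt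
    obtain ⟨g', hg', -⟩ := (E.coker_of_conflation hcr).2 t hjt0
    have hgi : g' ≫ i = g := by
      refine defl_cancel E ⟨K, j, hcr⟩ ?_
      rw [← Category.assoc, hg', ht]
    refine ⟨g', hgi, ?_⟩
    intro y hy
    have : (y - g') ≫ i = 0 := by rw [Preadditive.sub_comp, hy, hgi, sub_self]
    have := hmono _ this
    rwa [sub_eq_zero] at this
  -- a projective deflation onto `Z` lifts through `d`
  obtain ⟨Q, p, hQ, hp⟩ := hE.enoughProj Z
  obtain ⟨q, hq⟩ := (h (Opposite.op ⟨Q, hQ⟩)).2.1 p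
  rw [resYoneda_app] at hq
  change Q ⟶ Y at q
  have hqd : E.IsDeflation (q ≫ d) := by rw [hq]; exact hp
  -- `i` is an inflation
  obtain ⟨Ez, e, hce⟩ := inflation_of_ker E hker q hqd
  have hie : i ≫ e = 0 := (E.ker_of_conflation hce).1
  obtain ⟨ψ, hψ, -⟩ := (E.coker_of_conflation hce).2 d hcomp0
  -- `ψ : Ez ⟶ Z` with `e ≫ ψ = d` is mono
  have hψmono : ∀ {W : A} (t : W ⟶ Ez), t ≫ ψ = 0 → t = 0 := by
    intro W t ht
    obtain ⟨P, r, hP, hr⟩ := hE.enoughProj W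
    obtain ⟨u, hu⟩ := proj_lift E hP ⟨X, i, hce⟩ (r ≫ t)
    have hud : u ≫ d = 0 := by
      rw [← hψ, ← Category.assoc, hu, Category.assoc, ht, comp_zero]
    obtain ⟨y, hy⟩ := ((h (Opposite.op ⟨P, hP⟩)).2.2 u).mp
      (by erw [resYoneda_app]; exact hud)
    rw [resYoneda_app] at hy
    change P ⟶ X at y
    have h0 : r ≫ t = 0 := by
      rw [← hu, ← hy, Category.assoc, hie, comp_zero]
    exact defl_cancel E hr (by rw [h0, comp_zero])
  -- `ψ` is an isomorphism: run the engine with kernel `0`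
  obtain ⟨O, hO⟩ := HasZeroObject.zero (C := A)
  have hkψ : IsKer (0 : O ⟶ Ez) ψ := by
    refine ⟨zero_comp, ?_⟩
    intro W g hg
    have hg0 : g = 0 := hψmono g hg
    exact ⟨0, by simp [hg0], fun y _ => hO.eq_of_tgt y 0⟩
  have hqψ : E.IsDeflation ((q ≫ e) ≫ ψ) := by rw [Category.assoc, hψ]; exact hqd
  have hcψ := engine E hkψ (q ≫ e) hqψ
  have hDcoker := E.coker_of_conflation hcψ
  have hc₀ : (biprod.desc (biprod.lift (𝟙 Q) (-(q ≫ e))) (biprod.lift 0 (0 : O ⟶ Ez)) :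
      Q ⊞ O ⟶ Q ⊞ Ez) ≫ biprod.desc (q ≫ e) (𝟙 Ez) = 0 := by
    apply biprod.hom_ext'
    · rw [← Category.assoc, biprod.inl_desc, biprod.lift_desc]
      simp
    · rw [← Category.assoc, biprod.inr_desc, biprod.lift_desc]
      simp
  obtain ⟨χ, hχ, -⟩ := hDcoker.2 (biprod.desc (q ≫ e) (𝟙 Ez)) hc₀
  have hψχ : ψ ≫ χ = 𝟙 Ez := by
    calc ψ ≫ χ = (biprod.inr ≫ biprod.desc ((q ≫ e) ≫ ψ) ψ) ≫ χ := by
          rw [biprod.inr_desc]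
      _ = biprod.inr ≫ biprod.desc (q ≫ e) (𝟙 Ez) := by
          rw [Category.assoc, hχ]
      _ = 𝟙 Ez := biprod.inr_desc _ _
  have hχψ : χ ≫ ψ = 𝟙 Z := by
    apply hDcoker.cancel
    rw [← Category.assoc, hχ, Category.comp_id]
    apply biprod.hom_ext'
    · rw [← Category.assoc, biprod.inl_desc, biprod.inl_desc]
    · rw [← Category.assoc, biprod.inr_desc, biprod.inr_desc, Category.id_comp]
  exact E.iso_closed (Iso.refl X) (Iso.refl Y) ⟨ψ, χ, hψχ, hχψ⟩
    (by simp) (by simpa using hψ) hce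

end Paper
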